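/- Let k be a field of characteristic zero and B = k[U,V,W] with the standard grading where U, V, W have degree 1. There is no locally nilpotent derivation D on B that is homogeneous of degree 3 whose kernel is k[F,G] with F, G both homogeneous polynomials of degree 3 (i.e., there is no homogeneous LND of type (3,3)). -/
import Mathlib

open MvPolynomial

lemma mul_comp_zero {k : Type*} [Field k] {x y : MvPolynomial (Fin 3) k}
    (hx : ∀ d, ¬ (3 ∣ d) → homogeneousComponent d x = 0)
    (hy : ∀ d, ¬ (3 ∣ d) → homogeneousComponent d y = 0)
    (d : ℕ) (hd : ¬ (3 ∣ d)) : homogeneousComponent d (x * y) = 0 := by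
  conv_lhs => rw [← x.sum_homogeneousComponent, ← y.sum_homogeneousComponent]
  rw [Finset.sum_mul_sum, map_sum]
  apply Finset.sum_eq_zero
  intro i _
  rw [map_sum]
  apply Finset.sum_eq_zero
  intro j _
  by_cases hi : 3 ∣ i
  · by_cases hj : 3 ∣ j
    · have hhom : (homogeneousComponent i x * homogeneousComponent j y).IsHomogeneous (i + j) :=
        (homogeneousComponent_isHomogeneous i x).mul (homogeneousComponent_isHomogeneous j y)
      rw [homogeneousComponent_of_mem hhom, if_neg]
      rintro rfl
      exact hd (dvd_add hi hj)
    · rw [hy j hj, mul_zero, map_zero]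
  · rw [hx i hi, zero_mul, map_zero]

theorem stmt_13 {k : Type*} [Field k] [CharZero k] :
    ¬ ∃ (D : Derivation k (MvPolynomial (Fin 3) k) (MvPolynomial (Fin 3) k))
        (F G : MvPolynomial (Fin 3) k),
      (∀ b, ∃ n : ℕ, (⇑D)^[n] b = 0) ∧
      (∀ (i : ℕ) (f : MvPolynomial (Fin 3) k),
        f.IsHomogeneous i → (D f).IsHomogeneous (i + 3)) ∧
      F.IsHomogeneous 3 ∧ G.IsHomogeneous 3 ∧
      (∀ b : MvPolynomial (Fin 3) k, D b = 0 ↔ b ∈ Algebra.adjoin k {F, G}) := by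
  rintro ⟨D, F, G, hnil, hhom, hF, hG, hker⟩
  -- iterates of X 0 are homogeneous
  have hiter : ∀ j : ℕ, ((⇑D)^[j] (X 0)).IsHomogeneous (1 + 3 * j) := by
    intro j
    induction j with
    | zero => simpa using isHomogeneous_X k (0 : Fin 3)
    | succ j ih =>
      rw [Function.iterate_succ_apply']
      have h2 := hhom _ _ ih
      have he : 1 + 3 * (j + 1) = 1 + 3 * j + 3 := by ring
      rw [he]
      exact h2
  have hex : ∃ n : ℕ, (⇑D)^[n] (X (0 : Fin 3)) = 0 := hnil _
  classical
  set n := Nat.find hex with hn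
  have hn0 : n ≠ 0 := by
    intro h
    have := Nat.find_spec hex
    rw [← hn, h] at this
    simp only [Function.iterate_zero, id_eq] at this
    exact X_ne_zero (R := k) (0 : Fin 3) this
  set c := (⇑D)^[n - 1] (X (0 : Fin 3)) with hc
  have hcne : c ≠ 0 := Nat.find_min hex (Nat.sub_lt (Nat.pos_of_ne_zero hn0) one_pos)
  have hDc : D c = 0 := by
    have : (⇑D)^[n] (X (0 : Fin 3)) = 0 := Nat.find_spec hex
    rw [← Nat.succ_pred_eq_of_pos (Nat.pos_of_ne_zero hn0), Function.iterate_succ_apply'] at this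
    exact this
  have hcmem : c ∈ Algebra.adjoin k {F, G} := (hker c).mp hDc
  -- all elements of adjoin have homogeneous components only in degrees divisible by 3
  have key : ∀ x ∈ Algebra.adjoin k ({F, G} : Set (MvPolynomial (Fin 3) k)),
      ∀ d, ¬ (3 ∣ d) → homogeneousComponent d x = 0 := by
    intro x hx
    induction hx using Algebra.adjoin_induction with
    | mem y hy =>
      intro d hd
      rcases hy with rfl | rfl
      · rw [homogeneousComponent_of_mem hF, if_neg]
        rintro rfl; exact hd ⟨1, rfl⟩
      · rw [homogeneousComponent_of_mem hG, if_neg]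
        rintro rfl; exact hd ⟨1, rfl⟩
    | algebraMap r =>
      intro d hd
      have : (algebraMap k (MvPolynomial (Fin 3) k) r).IsHomogeneous 0 := by
        simpa using isHomogeneous_C (Fin 3) r
      rw [homogeneousComponent_of_mem this, if_neg]
      rintro rfl; exact hd ⟨0, rfl⟩
    | add y z _ _ hy hz =>
      intro d hd
      rw [map_add, hy d hd, hz d hd, add_zero]
    | mul y z _ _ hy hz => exact mul_comp_zero hy hz
  -- c is homogeneous of degree 1 + 3*(n-1), not divisible by 3
  have hch : c.IsHomogeneous (1 + 3 * (n - 1)) := hiter (n - 1)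
  have h3 : ¬ (3 ∣ (1 + 3 * (n - 1))) := by omega
  have := key c hcmem _ h3
  rw [homogeneousComponent_of_mem hch, if_pos rfl] at this
  exact hcne this
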